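/- If κ is a singular cardinal of cofinality λ < κ, then κ⁺ does not satisfy the rainbow partition relation κ⁺ →^poly (λ⁺ + 1)^2_{<κ-bdd}: there exists a coloring f : [κ⁺]^2 → κ⁺ all of whose color classes have size less than κ, such that no subset of κ⁺ of order type λ⁺ + 1 is rainbow for f. -/

import Mathlib

open Ordinal Set Cardinal

/-- If `κ` is a singular cardinal of cofinality `λ < κ`, then
`κ⁺ ↛^poly (λ⁺ + 1)²_{<κ-bdd}`: there is a `<κ`-bounded coloring of pairs from
`κ⁺` such that no subset of order type `λ⁺ + 1` is rainbow. -/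
theorem succ_singular_not_poly (κ : Cardinal.{0}) (hκ : ℵ₀ ≤ κ)
    (hsing : (κ.ord).cof < κ) :
    ∃ f : Ordinal → Ordinal → Ordinal,
      -- every color class has size < κ :
      (∀ ξ : Ordinal,
        (#{p : Ordinal × Ordinal //
            p.1 < p.2 ∧ p.2 < (Order.succ κ).ord ∧ f p.1 p.2 = ξ}) <
          Cardinal.lift.{1} κ) ∧
      -- no subset of κ⁺ of order type λ⁺ + 1 is rainbow for f :
      (∀ h : Ordinal → Ordinal,
        StrictMonoOn h (Set.Iio ((Order.succ ((κ.ord).cof)).ord + 1)) →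
        (∀ j < (Order.succ ((κ.ord).cof)).ord + 1, h j < (Order.succ κ).ord) →
        ∃ i j i' j',
          i < j ∧ j < (Order.succ ((κ.ord).cof)).ord + 1 ∧
          i' < j' ∧ j' < (Order.succ ((κ.ord).cof)).ord + 1 ∧
          (i, j) ≠ (i', j') ∧ f (h i) (h j) = f (h i') (h j')) := by
  have hlim : Order.IsSuccLimit κ.ord := Cardinal.isSuccLimit_ord hκ
  have hκ0 : κ.ord ≠ 0 := hlim.pos.ne'
  set μ : Cardinal := (κ.ord).cof with hμdef
  have hμκ : μ.ord < κ.ord := Cardinal.ord_lt_ord.mpr hsing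
  -- cofinal family
  obtain ⟨c0, hc0⟩ := Ordinal.exists_blsub_cof κ.ord
  set c : Ordinal → Ordinal := fun n => if h : n < μ.ord then c0 n h else 0 with hcdef
  have hclt : ∀ n < μ.ord, c n < κ.ord := by
    intro n hn
    simp only [hcdef, dif_pos hn]
    conv_rhs => rw [← hc0]
    exact Ordinal.lt_blsub _ _ _
  have hcof : ∀ γ < κ.ord, ∃ n < μ.ord, γ ≤ c n := by
    intro γ hγ
    conv at hγ => rw [← hc0]
    obtain ⟨n, hn, hle⟩ := Ordinal.lt_blsub_iff.mp hγ
    exact ⟨n, hn, by simp only [hcdef]; rw [dif_pos (show n < μ.ord from hn)]; exact hle⟩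
  -- injections from initial segments into κ.ord
  have hemb : ∀ β : Ordinal, ∃ e : Ordinal → Ordinal,
      β < (Order.succ κ).ord → ((∀ α < β, e α < κ.ord) ∧ Set.InjOn e (Set.Iio β)) := by
    intro β
    by_cases hβ : β < (Order.succ κ).ord
    · have h1 : β.card ≤ κ := Order.lt_succ_iff.mp (Cardinal.lt_ord.mp hβ)
      have h2 : #(Set.Iio β) ≤ #(Set.Iio κ.ord) := by
        rw [Ordinal.mk_Iio_ordinal, Ordinal.mk_Iio_ordinal, Cardinal.card_ord]
        exact Cardinal.lift_le.mpr h1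
      obtain ⟨E⟩ := h2
      refine ⟨fun α => if h : α < β then (E ⟨α, h⟩ : Set.Iio κ.ord).1 else 0,
        fun _ => ⟨?_, ?_⟩⟩
      · intro α hα; simp only [dif_pos hα]; exact (E ⟨α, hα⟩).2
      · intro a ha b hb hab
        simp only [Set.mem_Iio] at ha hb
        simp only [dif_pos ha, dif_pos hb] at hab
        exact congrArg Subtype.val (E.injective (Subtype.ext hab))
    · exact ⟨fun _ => 0, fun h => absurd h hβ⟩
  choose e he using hemb
  set g : Ordinal → Ordinal → Ordinal :=
    fun β α => sInf {n | n < μ.ord ∧ e β α ≤ c n} with hgdef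
  have hgmem : ∀ β, β < (Order.succ κ).ord → ∀ α < β,
      g β α < μ.ord ∧ e β α ≤ c (g β α) := by
    intro β hβ α hα
    have hne : {n | n < μ.ord ∧ e β α ≤ c n}.Nonempty := by
      obtain ⟨n, hn, hle⟩ := hcof (e β α) ((he β hβ).1 α hα)
      exact ⟨n, hn, hle⟩
    exact csInf_mem hne
  -- uniqueness of decomposition
  have huniq : ∀ β n β' n' : Ordinal, n < κ.ord → n' < κ.ord →
      κ.ord * β + n = κ.ord * β' + n' → β = β' ∧ n = n' := by
    intro β n β' n' hn hn' heq
    have hb : β = β' := by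
      have := congrArg (· / κ.ord) heq
      simpa only [Ordinal.mul_add_div _ hκ0, Ordinal.div_eq_zero_of_lt hn,
        Ordinal.div_eq_zero_of_lt hn', add_zero] using this
    subst hb
    exact ⟨rfl, (add_right_inj _).mp heq⟩
  refine ⟨fun α β => Ordinal.lift.{_, 0} (κ.ord * β + g β α), ?_, ?_⟩
  · -- bounded color classes
    intro ξ
    by_cases hS : Nonempty {p : Ordinal × Ordinal //
        p.1 < p.2 ∧ p.2 < (Order.succ κ).ord ∧
          Ordinal.lift.{_, 0} (κ.ord * p.2 + g p.2 p.1) = ξ}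
    · obtain ⟨⟨⟨α0, β0⟩, hab, hβ0, hξ⟩⟩ := hS
      set n0 : Ordinal := g β0 α0 with hn0def
      have hn0 : n0 < μ.ord := (hgmem β0 hβ0 α0 hab).1
      have hn0κ : n0 < κ.ord := hn0.trans hμκ
      have hbound : c n0 + 1 < κ.ord := by
        rw [Ordinal.add_one_eq_succ]; exact hlim.succ_lt (hclt n0 hn0)
      have key : ∀ p : {p : Ordinal × Ordinal //
          p.1 < p.2 ∧ p.2 < (Order.succ κ).ord ∧
            Ordinal.lift.{_, 0} (κ.ord * p.2 + g p.2 p.1) = ξ},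
          p.1.2 = β0 ∧ g p.1.2 p.1.1 = n0 := by
        intro p
        obtain ⟨h1, h2, h3⟩ := p.2
        have heq : κ.ord * p.1.2 + g p.1.2 p.1.1 = κ.ord * β0 + n0 :=
          Ordinal.lift_inj.mp (h3.trans hξ.symm)
        exact huniq _ _ _ _ (((hgmem _ h2 _ h1).1).trans hμκ) hn0κ heq
      have hinj : Function.Injective
          (fun p : {p : Ordinal × Ordinal //
              p.1 < p.2 ∧ p.2 < (Order.succ κ).ord ∧
                Ordinal.lift.{_, 0} (κ.ord * p.2 + g p.2 p.1) = ξ} =>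
            (⟨e β0 p.1.1, by
              obtain ⟨hβeq, hgeq⟩ := key p
              have h1' : p.1.1 < β0 := hβeq ▸ p.2.1
              have h4 := (hgmem β0 hβ0 p.1.1 h1').2
              rw [show g β0 p.1.1 = n0 by rw [← hβeq]; exact hgeq] at h4
              exact Set.mem_Iio.mpr (lt_of_le_of_lt h4 (lt_add_one _))⟩ :
              Set.Iio (c n0 + 1))) := by
        intro p q hpq
        obtain ⟨hpβ, _⟩ := key p
        obtain ⟨hqβ, _⟩ := key q
        have hval : e β0 p.1.1 = e β0 q.1.1 := congrArg Subtype.val hpq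
        have h1 : p.1.1 = q.1.1 :=
          (he β0 hβ0).2 (Set.mem_Iio.mpr (hpβ ▸ p.2.1)) (Set.mem_Iio.mpr (hqβ ▸ q.2.1)) hval
        exact Subtype.ext (Prod.ext h1 (hpβ.trans hqβ.symm))
      calc (#_) ≤ #(Set.Iio (c n0 + 1)) := Cardinal.mk_le_of_injective hinj
        _ = Cardinal.lift.{1} (c n0 + 1).card := Ordinal.mk_Iio_ordinal _
        _ < Cardinal.lift.{1} κ :=
          Cardinal.lift_lt.mpr (Cardinal.lt_ord.mp hbound)
    · rw [Cardinal.mk_eq_zero_iff.mpr (not_nonempty_iff.mp hS)]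
      simpa using Cardinal.lift_lt.{0,1}.mpr (Cardinal.aleph0_pos.trans_le hκ)
  · -- no rainbow set of type μ⁺ + 1
    intro h hmono hbd
    set T : Ordinal := (Order.succ μ).ord with hTdef
    have hT : T < T + 1 := lt_add_one T
    have hβ : h T < (Order.succ κ).ord := hbd T hT
    have hhi : ∀ i < T, h i < h T := fun i hi =>
      hmono (Set.mem_Iio.mpr (hi.trans hT)) (Set.mem_Iio.mpr hT) hi
    have hninj : ¬ Function.Injective
        (fun i : Set.Iio T => (⟨g (h T) (h i.1),
          (hgmem (h T) hβ (h i.1) (hhi i.1 i.2)).1⟩ : Set.Iio μ.ord)) := by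
      intro hinj
      have hle := Cardinal.mk_le_of_injective hinj
      rw [Ordinal.mk_Iio_ordinal, Ordinal.mk_Iio_ordinal, hTdef, Cardinal.card_ord,
        Cardinal.card_ord] at hle
      exact (Order.lt_succ μ).not_ge (Cardinal.lift_le.mp hle)
    obtain ⟨i, i', heq, hne⟩ := Function.not_injective_iff.mp hninj
    refine ⟨i.1, T, i'.1, T, i.2, hT, i'.2, hT, ?_, ?_⟩
    · intro hcontra
      exact hne (Subtype.ext (congrArg Prod.fst hcontra))
    · have hgg : g (h T) (h i.1) = g (h T) (h i'.1) := congrArg Subtype.val heq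
      dsimp only
      rw [hgg]
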